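/- For all integers R, S, u, every positive integer v, and every real number μ, the identity (cos(πμ) + (−1)^R cos(uπS/v)) · Σ_{s=1}^{v−1} (−1)^{(R−1)(s−1)} sin((v−s)πμ) sin(uπsS/v) = (1/2) sin(vπμ) sin(uπS/v) holds. -/

import Mathlib

open Real

/-- Auxiliary telescoping function for the trig identity. -/
noncomputable def Gfun (σ a b w : ℝ) (i : ℕ) : ℝ :=
  σ ^ i * (Real.sin ((w - (i : ℝ)) * a) * Real.sin (((i : ℝ) + 1) * b)
    - σ * (Real.sin ((w - (i : ℝ) - 1) * a) * Real.sin ((i : ℝ) * b)))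

/-- Lemma 7.1: the key trigonometric identity underlying the modular
S-transformation of atypical characters. -/
theorem atypical_trig_identity (R S u : ℤ) (v : ℤ) (hv : 0 < v) (μ : ℝ) :
    (Real.cos (π * μ) + (-1 : ℝ) ^ R * Real.cos ((u : ℝ) * π * S / v)) *
      ∑ s ∈ Finset.Icc (1 : ℤ) (v - 1),
        (-1 : ℝ) ^ ((R - 1) * (s - 1)) * Real.sin (((v : ℝ) - (s : ℝ)) * π * μ) *
          Real.sin ((u : ℝ) * π * (s : ℝ) * S / v)
    = (1 / 2) * Real.sin ((v : ℝ) * π * μ) * Real.sin ((u : ℝ) * π * S / v) := by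
  have hvR : (v : ℝ) ≠ 0 := by
    exact_mod_cast hv.ne'
  have hne : (-1 : ℝ) ≠ 0 := by norm_num
  set n : ℕ := (v - 1).toNat with hn
  set σ : ℝ := (-1 : ℝ) ^ (R - 1) with hσdef
  have hσ1 : σ * σ = 1 := by
    rw [hσdef, ← zpow_add₀ hne, show R - 1 + (R - 1) = 2 * (R - 1) by ring, zpow_mul,
      show ((-1 : ℝ)) ^ (2 : ℤ) = 1 by norm_num, one_zpow]
  have hRσ : (-1 : ℝ) ^ R = -σ := by
    rw [hσdef, show R = (R - 1) + 1 by ring, zpow_add₀ hne, zpow_one]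
    ring
  -- reindex the sum over range n
  have hIcc : Finset.Icc (1 : ℤ) (v - 1) =
      Finset.map ⟨fun i : ℕ => (i : ℤ) + 1, show Function.Injective (fun i : ℕ => (i : ℤ) + 1) by intro x y h; simpa using h⟩ (Finset.range n) := by
    ext x
    simp only [Finset.mem_Icc, Finset.mem_map, Finset.mem_range, Function.Embedding.coeFn_mk, hn]
    constructor
    · rintro ⟨h1, h2⟩
      exact ⟨(x - 1).toNat, by omega, by omega⟩
    · rintro ⟨i, hi, rfl⟩
      omega
  set a : ℝ := π * μ with ha
  set b : ℝ := (u : ℝ) * π * (S : ℝ) / (v : ℝ) with hb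
  have hsum : 2 * ((Real.cos a - σ * Real.cos b) *
      ∑ s ∈ Finset.Icc (1 : ℤ) (v - 1),
        (-1 : ℝ) ^ ((R - 1) * (s - 1)) * Real.sin (((v : ℝ) - (s : ℝ)) * π * μ) *
          Real.sin ((u : ℝ) * π * (s : ℝ) * S / v)) = Gfun σ a b v 0 - Gfun σ a b v n := by
    rw [hIcc, Finset.sum_map, Finset.mul_sum, Finset.mul_sum,
      ← Finset.sum_range_sub' (Gfun σ a b v) n]
    apply Finset.sum_congr rfl
    intro i hi
    simp only [Function.Embedding.coeFn_mk, Gfun]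
    push_cast
    have hc : ((-1 : ℝ)) ^ ((R - 1) * ((i : ℤ) + 1 - 1)) = σ ^ i := by
      rw [show (R - 1) * ((i : ℤ) + 1 - 1) = (R - 1) * (i : ℤ) by ring, zpow_mul, ← hσdef,
        zpow_natCast]
    have hL1 : Real.sin (((v : ℝ) - ((i : ℝ) + 1)) * π * μ)
        = Real.sin (((v : ℝ) - ((i : ℝ) + 1)) * a) := congrArg Real.sin (by rw [ha]; ring)
    have hL2 : Real.sin ((u : ℝ) * π * ((i : ℝ) + 1) * S / v)
        = Real.sin (((i : ℝ) + 1) * b) := congrArg Real.sin (by rw [hb]; ring)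
    have h1 : Real.sin (((v : ℝ) - (i : ℝ)) * a)
        = Real.sin (((v : ℝ) - ((i : ℝ) + 1)) * a) * Real.cos a
          + Real.cos (((v : ℝ) - ((i : ℝ) + 1)) * a) * Real.sin a := by
      rw [show ((v : ℝ) - (i : ℝ)) * a = ((v : ℝ) - ((i : ℝ) + 1)) * a + a by ring, Real.sin_add]
    have h2 : Real.sin ((i : ℝ) * b)
        = Real.sin (((i : ℝ) + 1) * b) * Real.cos b
          - Real.cos (((i : ℝ) + 1) * b) * Real.sin b := by
      rw [show ((i : ℝ)) * b = ((i : ℝ) + 1) * b - b by ring, Real.sin_sub]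
    have h3 : Real.sin (((i : ℝ) + 1 + 1) * b)
        = Real.sin (((i : ℝ) + 1) * b) * Real.cos b
          + Real.cos (((i : ℝ) + 1) * b) * Real.sin b := by
      rw [show ((i : ℝ) + 1 + 1) * b = ((i : ℝ) + 1) * b + b by ring, Real.sin_add]
    have h4 : Real.sin (((v : ℝ) - ((i : ℝ) + 1) - 1) * a)
        = Real.sin (((v : ℝ) - ((i : ℝ) + 1)) * a) * Real.cos a
          - Real.cos (((v : ℝ) - ((i : ℝ) + 1)) * a) * Real.sin a := by
      rw [show ((v : ℝ) - ((i : ℝ) + 1) - 1) * a = ((v : ℝ) - ((i : ℝ) + 1)) * a - a by ring,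
        Real.sin_sub]
    have h5 : Real.sin (((v : ℝ) - (i : ℝ) - 1) * a)
        = Real.sin (((v : ℝ) - ((i : ℝ) + 1)) * a) := congrArg Real.sin (by ring)
    rw [hc, hL1, hL2, h1, h2, h3, h4, h5]
    linear_combination (-(σ ^ i) * (Real.sin (((v : ℝ) - ((i : ℝ) + 1)) * a) * Real.cos a
        * Real.sin (((i : ℝ) + 1) * b)
      - Real.cos (((v : ℝ) - ((i : ℝ) + 1)) * a) * Real.sin a
        * Real.sin (((i : ℝ) + 1) * b))) * hσ1
  have hG0 : Gfun σ a b v 0 = Real.sin ((v : ℝ) * π * μ) * Real.sin ((u : ℝ) * π * S / v) := by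
    simp only [Gfun, Nat.cast_zero, pow_zero, one_mul]
    rw [show ((v : ℝ) - 0) * a = (v : ℝ) * π * μ by rw [ha]; ring,
      show ((0 : ℝ) + 1) * b = (u : ℝ) * π * S / v by rw [hb]; ring,
      show (0 : ℝ) * b = 0 by ring]
    simp
  have hGn : Gfun σ a b v n = 0 := by
    have hnv : ((n : ℝ)) = (v : ℝ) - 1 := by
      have : ((v - 1).toNat : ℤ) = v - 1 := Int.toNat_of_nonneg (by omega)
      rw [hn]
      exact_mod_cast congrArg (Int.cast : ℤ → ℝ) this
    simp only [Gfun, hnv]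
    have h1 : ((v : ℝ) - ((v : ℝ) - 1) - 1) * a = 0 := by ring
    have h2 : (((v : ℝ) - 1) + 1) * b = ((u * S : ℤ) : ℝ) * π := by
      rw [hb]
      push_cast
      rw [show ((v : ℝ) - 1 + 1) * ((u : ℝ) * π * (S : ℝ) / (v : ℝ))
        = (u : ℝ) * (S : ℝ) * π * ((v : ℝ) / (v : ℝ)) by ring, div_self hvR, mul_one]
    rw [h1, h2, Real.sin_int_mul_pi]
    simp
  rw [hRσ, show Real.cos (π * μ) + -σ * Real.cos ((u : ℝ) * π * S / v)
      = Real.cos a - σ * Real.cos b by rw [ha, hb]; ring]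
  rw [hG0, hGn] at hsum
  linarith [hsum]
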